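/- Let s ∈ (0, 1], λ > 0, σ ≥ 0 and d ≥ 1. For f with finite norm ‖f‖² = Σ_{k∈ℤ^d} ∫_{ℝ^d} ⟨|k|+|η|⟩^{2σ} e^{2λ⟨|k|+|η|⟩^s} |f̂_k(η)|² dη and h(t) with ‖h‖² = Σ_{k∈ℤ^d} ⟨|k|+|kt|⟩^{2σ} e^{2λ⟨|k|+|kt|⟩^s} |ĥ_k|², where σ > d/2, there is a constant C = C(λ, σ, s, d) such that Σ_{k∈ℤ^d} ∫_{ℝ^d} |Σ_{ℓ∈ℤ^d} ⟨|k|+|η|⟩^σ e^{λ⟨|k|+|η|⟩^s} ĥ_ℓ f̂_{k-ℓ}(η - ℓt)|² dη ≤ C·‖h‖²·‖f‖². -/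

import Mathlib

open MeasureTheory

/-- Japanese bracket. -/
noncomputable def jb (x : ℝ) : ℝ := Real.sqrt (1 + x ^ 2)

/-- ℓ¹ norm on ℝ^d. -/
noncomputable def rnorm {d : ℕ} (v : Fin d → ℝ) : ℝ := ∑ i, |v i|

/-- ℓ¹ norm of an integer frequency vector. -/
noncomputable def znorm {d : ℕ} (k : Fin d → ℤ) : ℝ := ∑ i, |(k i : ℝ)|

/-- Gevrey weight `⟨|k|+|η|⟩^σ e^{λ⟨|k|+|η|⟩^s}`. -/
noncomputable def gw {d : ℕ} (lam σ s : ℝ) (k : Fin d → ℤ) (η : Fin d → ℝ) : ℝ :=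
  jb (znorm k + rnorm η) ^ σ * Real.exp (lam * jb (znorm k + rnorm η) ^ s)

noncomputable def ee {d : ℕ} (lam s : ℝ) (k : Fin d → ℤ) (η : Fin d → ℝ) : ℝ :=
  Real.exp (lam * jb (znorm k + rnorm η) ^ s)

lemma jb_nonneg (x : ℝ) : 0 ≤ jb x := Real.sqrt_nonneg _

lemma one_le_jb (x : ℝ) : 1 ≤ jb x := by
  have h1 : (1 : ℝ) = Real.sqrt 1 := Real.sqrt_one.symm
  rw [jb, h1]
  exact Real.sqrt_le_sqrt (by nlinarith [sq_nonneg x])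

lemma jb_pos (x : ℝ) : 0 < jb x := lt_of_lt_of_le one_pos (one_le_jb x)

lemma jb_sq (x : ℝ) : jb x ^ 2 = 1 + x ^ 2 := Real.sq_sqrt (by nlinarith [sq_nonneg x])

lemma self_le_jb {x : ℝ} (hx : 0 ≤ x) : x ≤ jb x := by
  have := Real.sqrt_le_sqrt (show x ^ 2 ≤ 1 + x ^ 2 by linarith)
  rwa [Real.sqrt_sq hx] at this

lemma jb_mono {a b : ℝ} (ha : 0 ≤ a) (hab : a ≤ b) : jb a ≤ jb b :=
  Real.sqrt_le_sqrt (by nlinarith)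

lemma jb_add_le {a b : ℝ} (ha : 0 ≤ a) (hb : 0 ≤ b) : jb (a + b) ≤ jb a + jb b := by
  have ha' := self_le_jb ha
  have hb' := self_le_jb hb
  have hab : a * b ≤ jb a * jb b := mul_le_mul ha' hb' hb (jb_nonneg a)
  have h2 : 1 + (a + b) ^ 2 ≤ (jb a + jb b) ^ 2 := by
    nlinarith [jb_sq a, jb_sq b, jb_nonneg a, jb_nonneg b]
  calc jb (a + b) = Real.sqrt (1 + (a + b) ^ 2) := rfl
    _ ≤ Real.sqrt ((jb a + jb b) ^ 2) := Real.sqrt_le_sqrt h2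
    _ = jb a + jb b := Real.sqrt_sq (by nlinarith [jb_nonneg a, jb_nonneg b])

lemma rpow_subadd {u v s : ℝ} (hu : 0 ≤ u) (hv : 0 ≤ v) (hs0 : 0 ≤ s) (hs1 : s ≤ 1) :
    (u + v) ^ s ≤ u ^ s + v ^ s := by
  have key := NNReal.rpow_add_le_add_rpow u.toNNReal v.toNNReal hs0 hs1
  have h := NNReal.coe_le_coe.2 key
  rw [NNReal.coe_rpow, NNReal.coe_add, NNReal.coe_add, NNReal.coe_rpow, NNReal.coe_rpow,
    Real.coe_toNNReal _ hu, Real.coe_toNNReal _ hv] at h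
  exact h

lemma rpow_add_le_two_rpow {u v σ : ℝ} (hu : 0 ≤ u) (hv : 0 ≤ v) (hσ : 0 ≤ σ) :
    (u + v) ^ σ ≤ 2 ^ σ * (u ^ σ + v ^ σ) := by
  rcases le_total u v with huv | huv
  · calc (u + v) ^ σ ≤ (2 * v) ^ σ := Real.rpow_le_rpow (by linarith) (by linarith) hσ
      _ = 2 ^ σ * v ^ σ := Real.mul_rpow (by norm_num) hv
      _ ≤ 2 ^ σ * (u ^ σ + v ^ σ) := by
          have := Real.rpow_nonneg hu σ
          have h2 : (0:ℝ) ≤ 2 ^ σ := Real.rpow_nonneg (by norm_num) σ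
          nlinarith
  · calc (u + v) ^ σ ≤ (2 * u) ^ σ := Real.rpow_le_rpow (by linarith) (by linarith) hσ
      _ = 2 ^ σ * u ^ σ := Real.mul_rpow (by norm_num) hu
      _ ≤ 2 ^ σ * (u ^ σ + v ^ σ) := by
          have := Real.rpow_nonneg hv σ
          have h2 : (0:ℝ) ≤ 2 ^ σ := Real.rpow_nonneg (by norm_num) σ
          nlinarith

lemma znorm_nonneg {d : ℕ} (k : Fin d → ℤ) : 0 ≤ znorm k :=
  Finset.sum_nonneg fun i _ => abs_nonneg _

lemma rnorm_nonneg {d : ℕ} (v : Fin d → ℝ) : 0 ≤ rnorm v :=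
  Finset.sum_nonneg fun i _ => abs_nonneg _

lemma znorm_tri {d : ℕ} (k l : Fin d → ℤ) : znorm k ≤ znorm l + znorm (k - l) := by
  rw [znorm, znorm, znorm, ← Finset.sum_add_distrib]
  apply Finset.sum_le_sum
  intro i _
  have h : ((k - l) i : ℝ) = (k i : ℝ) - (l i : ℝ) := by push_cast [Pi.sub_apply]; ring
  rw [h]
  calc |(k i : ℝ)| = |(l i : ℝ) + ((k i : ℝ) - l i)| := by ring_nf
    _ ≤ |(l i : ℝ)| + |(k i : ℝ) - l i| := abs_add_le _ _
  
lemma rnorm_tri {d : ℕ} (v w : Fin d → ℝ) : rnorm v ≤ rnorm w + rnorm (v - w) := by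
  rw [rnorm, rnorm, rnorm, ← Finset.sum_add_distrib]
  apply Finset.sum_le_sum
  intro i _
  calc |v i| = |w i + (v i - w i)| := by ring_nf
    _ ≤ |w i| + |v i - w i| := abs_add_le _ _
    _ = |w i| + |(v - w) i| := rfl

lemma ee_pos {d : ℕ} (lam s : ℝ) (k : Fin d → ℤ) (η : Fin d → ℝ) : 0 < ee lam s k η :=
  Real.exp_pos _

lemma gw_pos {d : ℕ} (lam σ s : ℝ) (k : Fin d → ℤ) (η : Fin d → ℝ) : 0 < gw lam σ s k η :=
  mul_pos (Real.rpow_pos_of_pos (jb_pos _) _) (Real.exp_pos _)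

/-- Step A: the Gevrey weight splitting inequality. -/
lemma gw_split {d : ℕ} {lam σ s : ℝ} (hlam : 0 ≤ lam) (hσ0 : 0 ≤ σ) (hs0 : 0 < s) (hs1 : s ≤ 1)
    {k l m : Fin d → ℤ} {η θ ζ : Fin d → ℝ}
    (htri : znorm k + rnorm η ≤ (znorm l + rnorm θ) + (znorm m + rnorm ζ)) :
    gw lam σ s k η ≤
      2 ^ σ * (gw lam σ s l θ * ee lam s m ζ + ee lam s l θ * gw lam σ s m ζ) := by
  set x := znorm k + rnorm η with hx
  set y := znorm l + rnorm θ with hy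
  set z := znorm m + rnorm ζ with hz
  have hx0 : 0 ≤ x := add_nonneg (znorm_nonneg _) (rnorm_nonneg _)
  have hy0 : 0 ≤ y := add_nonneg (znorm_nonneg _) (rnorm_nonneg _)
  have hz0 : 0 ≤ z := add_nonneg (znorm_nonneg _) (rnorm_nonneg _)
  have hjb : jb x ≤ jb y + jb z :=
    le_trans (jb_mono hx0 htri) (jb_add_le hy0 hz0)
  have hjbs : jb x ^ s ≤ jb y ^ s + jb z ^ s := by
    calc jb x ^ s ≤ (jb y + jb z) ^ s :=
          Real.rpow_le_rpow (jb_nonneg x) hjb hs0.le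
      _ ≤ jb y ^ s + jb z ^ s := rpow_subadd (jb_nonneg y) (jb_nonneg z) hs0.le hs1
  have hexp : Real.exp (lam * jb x ^ s) ≤
      Real.exp (lam * jb y ^ s) * Real.exp (lam * jb z ^ s) := by
    rw [← Real.exp_add]
    apply Real.exp_le_exp.2
    nlinarith [mul_le_mul_of_nonneg_left hjbs hlam]
  have hpoly : jb x ^ σ ≤ 2 ^ σ * (jb y ^ σ + jb z ^ σ) := by
    calc jb x ^ σ ≤ (jb y + jb z) ^ σ :=
          Real.rpow_le_rpow (jb_nonneg x) hjb hσ0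
      _ ≤ 2 ^ σ * (jb y ^ σ + jb z ^ σ) :=
          rpow_add_le_two_rpow (jb_nonneg y) (jb_nonneg z) hσ0
  have hmain : jb x ^ σ * Real.exp (lam * jb x ^ s) ≤
      (2 ^ σ * (jb y ^ σ + jb z ^ σ)) *
        (Real.exp (lam * jb y ^ s) * Real.exp (lam * jb z ^ s)) := by
    apply mul_le_mul hpoly hexp (Real.exp_pos _).le
    have h2σ : (0:ℝ) ≤ 2 ^ σ := Real.rpow_nonneg (by norm_num) _
    have := Real.rpow_nonneg (jb_nonneg y) σ
    have := Real.rpow_nonneg (jb_nonneg z) σ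
    nlinarith
  calc gw lam σ s k η = jb x ^ σ * Real.exp (lam * jb x ^ s) := rfl
    _ ≤ (2 ^ σ * (jb y ^ σ + jb z ^ σ)) *
        (Real.exp (lam * jb y ^ s) * Real.exp (lam * jb z ^ s)) := hmain
    _ = 2 ^ σ * (gw lam σ s l θ * ee lam s m ζ + ee lam s l θ * gw lam σ s m ζ) := by
        rw [gw, ee, gw, ee]; ring

/-- The exponential part is dominated by the weight times `jb(znorm)⁻^σ`. -/
lemma ee_le_gw {d : ℕ} {lam σ s : ℝ} (hσ0 : 0 ≤ σ) (m : Fin d → ℤ) (ζ : Fin d → ℝ) :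
    ee lam s m ζ ≤ jb (znorm m) ^ (-σ) * gw lam σ s m ζ := by
  have h1 : jb (znorm m) ^ σ * ee lam s m ζ ≤ gw lam σ s m ζ := by
    rw [gw, ee]
    apply mul_le_mul_of_nonneg_right _ (Real.exp_pos _).le
    exact Real.rpow_le_rpow (jb_nonneg _)
      (jb_mono (znorm_nonneg _) (le_add_of_nonneg_right (rnorm_nonneg _))) hσ0
  have h2 : jb (znorm m) ^ (-σ) * (jb (znorm m) ^ σ * ee lam s m ζ) = ee lam s m ζ := by
    rw [← mul_assoc, ← Real.rpow_add (jb_pos _)]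
    simp
  calc ee lam s m ζ = jb (znorm m) ^ (-σ) * (jb (znorm m) ^ σ * ee lam s m ζ) := h2.symm
    _ ≤ jb (znorm m) ^ (-σ) * gw lam σ s m ζ :=
        mul_le_mul_of_nonneg_left h1 (Real.rpow_nonneg (jb_nonneg _) _)

/-- The combined real pointwise bound. -/
lemma key_real {d : ℕ} {lam σ s : ℝ} (hlam : 0 ≤ lam) (hσ0 : 0 ≤ σ) (hs0 : 0 < s) (hs1 : s ≤ 1)
    {k l m : Fin d → ℤ} {η θ ζ : Fin d → ℝ}
    (htri : znorm k + rnorm η ≤ (znorm l + rnorm θ) + (znorm m + rnorm ζ))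
    {A F : ℝ} (hA : 0 ≤ A) (hF : 0 ≤ F) :
    gw lam σ s k η * (A * F) ≤
      2 ^ σ * ((gw lam σ s l θ * A) * (jb (znorm m) ^ (-σ) * (gw lam σ s m ζ * F)) +
        (jb (znorm l) ^ (-σ) * (gw lam σ s l θ * A)) * (gw lam σ s m ζ * F)) := by
  have h1 := gw_split hlam hσ0 hs0 hs1 htri
  have h2 := ee_le_gw (lam := lam) (s := s) hσ0 m ζ
  have h3 := ee_le_gw (lam := lam) (s := s) hσ0 l θ
  have hgwl := (gw_pos lam σ s l θ).le
  have hgwm := (gw_pos lam σ s m ζ).le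
  have hwm : (0:ℝ) ≤ jb (znorm m) ^ (-σ) := Real.rpow_nonneg (jb_nonneg _) _
  have hwl : (0:ℝ) ≤ jb (znorm l) ^ (-σ) := Real.rpow_nonneg (jb_nonneg _) _
  have h4 : gw lam σ s k η ≤
      2 ^ σ * (gw lam σ s l θ * (jb (znorm m) ^ (-σ) * gw lam σ s m ζ) +
        (jb (znorm l) ^ (-σ) * gw lam σ s l θ) * gw lam σ s m ζ) := by
    refine le_trans h1 ?_
    have h2σ : (0:ℝ) ≤ 2 ^ σ := Real.rpow_nonneg (by norm_num) _
    apply mul_le_mul_of_nonneg_left _ h2σ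
    apply add_le_add
    · exact mul_le_mul_of_nonneg_left h2 hgwl
    · exact mul_le_mul_of_nonneg_right h3 hgwm
  calc gw lam σ s k η * (A * F) ≤
      (2 ^ σ * (gw lam σ s l θ * (jb (znorm m) ^ (-σ) * gw lam σ s m ζ) +
        (jb (znorm l) ^ (-σ) * gw lam σ s l θ) * gw lam σ s m ζ)) * (A * F) :=
        mul_le_mul_of_nonneg_right h4 (by positivity)
    _ = 2 ^ σ * ((gw lam σ s l θ * A) * (jb (znorm m) ^ (-σ) * (gw lam σ s m ζ * F)) +
        (jb (znorm l) ^ (-σ) * (gw lam σ s l θ * A)) * (gw lam σ s m ζ * F)) := by ring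

open scoped ENNReal NNReal

lemma ennreal_rpow_two_eq (x : ℝ≥0∞) : x ^ (2:ℝ) = x * x := by
  rw [show (2:ℝ) = ((2:ℕ):ℝ) by norm_num, ENNReal.rpow_natCast]; ring

lemma ennreal_rpow_half_sq (x : ℝ≥0∞) : (x ^ (1/2:ℝ)) ^ (2:ℝ) = x := by
  rw [← ENNReal.rpow_mul]; norm_num

lemma ennreal_rpow_sq_half (x : ℝ≥0∞) : (x ^ (2:ℝ)) ^ (1/2:ℝ) = x := by
  rw [← ENNReal.rpow_mul]; norm_num

lemma iSup_rpow_two (a : ℕ → ℝ≥0∞) (ha : Monotone a) :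
    (⨆ n, a n) ^ (2:ℝ) = ⨆ n, a n ^ (2:ℝ) := by
  simp_rw [ennreal_rpow_two_eq]
  apply le_antisymm
  · rw [ENNReal.iSup_mul]
    apply iSup_le; intro n
    rw [ENNReal.mul_iSup]
    apply iSup_le; intro m
    calc a n * a m ≤ a (max n m) * a (max n m) :=
          mul_le_mul' (ha (le_max_left _ _)) (ha (le_max_right _ _))
      _ ≤ ⨆ k, a k * a k := le_iSup (fun k => a k * a k) (max n m)
  · exact iSup_le fun n => mul_le_mul' (le_iSup a n) (le_iSup a n)

/-- The mixed `ℓ²L²` norm of an `ℝ≥0∞`-valued function. -/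
noncomputable def MN {d : ℕ} (φ : (Fin d → ℤ) → (Fin d → ℝ) → ℝ≥0∞) : ℝ≥0∞ :=
  (∑' k : Fin d → ℤ, ∫⁻ η : Fin d → ℝ, φ k η ^ (2:ℝ)) ^ (1/2 : ℝ)

lemma MN_sq {d : ℕ} (φ : (Fin d → ℤ) → (Fin d → ℝ) → ℝ≥0∞) :
    (MN φ) ^ (2:ℝ) = ∑' k, ∫⁻ η, φ k η ^ (2:ℝ) := ennreal_rpow_half_sq _

lemma MN_mono {d : ℕ} {φ ψ : (Fin d → ℤ) → (Fin d → ℝ) → ℝ≥0∞}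
    (h : ∀ k η, φ k η ≤ ψ k η) : MN φ ≤ MN ψ := by
  apply ENNReal.rpow_le_rpow _ (by norm_num)
  exact ENNReal.tsum_le_tsum fun k => lintegral_mono fun η =>
    ENNReal.rpow_le_rpow (h k η) (by norm_num)

lemma MN_add_le {d : ℕ} {φ ψ : (Fin d → ℤ) → (Fin d → ℝ) → ℝ≥0∞}
    (hφ : ∀ k, AEMeasurable (φ k)) (hψ : ∀ k, AEMeasurable (ψ k)) :
    MN (fun k η => φ k η + ψ k η) ≤ MN φ + MN ψ := by
  set u := fun k => (∫⁻ η, φ k η ^ (2:ℝ)) ^ (1/2:ℝ) with hu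
  set v := fun k => (∫⁻ η, ψ k η ^ (2:ℝ)) ^ (1/2:ℝ) with hv
  have hk : ∀ k, (∫⁻ η, (φ k η + ψ k η) ^ (2:ℝ)) ≤ (u k + v k) ^ (2:ℝ) := by
    intro k
    have h := ENNReal.lintegral_Lp_add_le (hφ k) (hψ k) one_le_two
    have h' : (∫⁻ η, (φ k η + ψ k η) ^ (2:ℝ)) ^ (1/2:ℝ) ≤ u k + v k := by
      simp only [Pi.add_apply] at h; exact h
    calc (∫⁻ η, (φ k η + ψ k η) ^ (2:ℝ))
        = ((∫⁻ η, (φ k η + ψ k η) ^ (2:ℝ)) ^ (1/2:ℝ)) ^ (2:ℝ) :=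
          (ennreal_rpow_half_sq _).symm
      _ ≤ (u k + v k) ^ (2:ℝ) := ENNReal.rpow_le_rpow h' (by norm_num)
  have hcount := ENNReal.lintegral_Lp_add_le (μ := Measure.count)
    (measurable_of_countable u).aemeasurable (measurable_of_countable v).aemeasurable
    (one_le_two (α := ℝ))
  rw [lintegral_count, lintegral_count, lintegral_count] at hcount
  calc MN (fun k η => φ k η + ψ k η)
      ≤ (∑' k, (u k + v k) ^ (2:ℝ)) ^ (1/2:ℝ) := by
        apply ENNReal.rpow_le_rpow _ (by norm_num)
        exact ENNReal.tsum_le_tsum hk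
    _ ≤ (∑' k, u k ^ (2:ℝ)) ^ (1/2:ℝ) + (∑' k, v k ^ (2:ℝ)) ^ (1/2:ℝ) := by
        simp only [Pi.add_apply] at hcount; exact hcount
    _ = MN φ + MN ψ := by
        rw [MN, MN]
        congr 1 <;> · congr 1; apply tsum_congr; intro k; exact ennreal_rpow_half_sq _

lemma MN_smul {d : ℕ} (c : ℝ≥0∞) (hc : c ≠ ⊤) (φ : (Fin d → ℤ) → (Fin d → ℝ) → ℝ≥0∞) :
    MN (fun k η => c * φ k η) = c * MN φ := by
  have hc2 : c ^ (2:ℝ) ≠ ⊤ := ENNReal.rpow_ne_top_of_nonneg (by norm_num) hc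
  rw [MN, MN]
  have : ∀ k, (∫⁻ η, (c * φ k η) ^ (2:ℝ)) = c ^ (2:ℝ) * ∫⁻ η, φ k η ^ (2:ℝ) := by
    intro k
    rw [← lintegral_const_mul' _ _ hc2]
    congr 1; funext η
    rw [ENNReal.mul_rpow_of_nonneg _ _ (by norm_num : (0:ℝ) ≤ 2)]
  simp_rw [this]
  rw [ENNReal.tsum_mul_left, ENNReal.mul_rpow_of_nonneg _ _ (by norm_num : (0:ℝ) ≤ 1/2),
    ← ENNReal.rpow_mul]
  norm_num

lemma MN_finsum_le {d : ℕ} (e : ℕ ≃ (Fin d → ℤ))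
    (g : (Fin d → ℤ) → (Fin d → ℤ) → (Fin d → ℝ) → ℝ≥0∞)
    (hg : ∀ l k, AEMeasurable (g l k)) (n : ℕ) :
    MN (fun k η => ∑ i ∈ Finset.range n, g (e i) k η) ≤
      ∑ i ∈ Finset.range n, MN (g (e i)) := by
  induction n with
  | zero =>
      simp only [Finset.range_zero, Finset.sum_empty]
      rw [MN]
      simp [ENNReal.zero_rpow_of_pos, show (0:ℝ) < 2 by norm_num,
        show (0:ℝ) < 1/2 by norm_num]
  | succ n ih =>
      have heq : MN (fun k η => ∑ i ∈ Finset.range (n+1), g (e i) k η) =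
          MN (fun k η => (∑ i ∈ Finset.range n, g (e i) k η) + g (e n) k η) := by
        simp_rw [Finset.sum_range_succ]
      rw [heq, Finset.sum_range_succ]
      calc MN (fun k η => (∑ i ∈ Finset.range n, g (e i) k η) + g (e n) k η)
          ≤ MN (fun k η => ∑ i ∈ Finset.range n, g (e i) k η) + MN (g (e n)) :=
            MN_add_le (fun k => Finset.aemeasurable_fun_sum _ fun i _ => hg (e i) k)
              (fun k => hg (e n) k)
        _ ≤ (∑ i ∈ Finset.range n, MN (g (e i))) + MN (g (e n)) := add_le_add_left ih _

lemma MN_tsum_le {d : ℕ} (e : ℕ ≃ (Fin d → ℤ))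
    (g : (Fin d → ℤ) → (Fin d → ℤ) → (Fin d → ℝ) → ℝ≥0∞)
    (hg : ∀ l k, AEMeasurable (g l k)) :
    MN (fun k η => ∑' l, g l k η) ≤ ∑' l, MN (g l) := by
  classical
  set P : ℕ → (Fin d → ℤ) → (Fin d → ℝ) → ℝ≥0∞ :=
    fun n k η => ∑ i ∈ Finset.range n, g (e i) k η with hP
  have hPmono : ∀ k η, Monotone fun n => P n k η := by
    intro k η n m hnm
    exact Finset.sum_le_sum_of_subset (Finset.range_subset_range.2 hnm)
  have hS : ∀ k η, (∑' l, g l k η) = ⨆ n, P n k η := by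
    intro k η
    rw [← Equiv.tsum_eq e (fun l => g l k η)]
    exact ENNReal.tsum_eq_iSup_nat
  have hPmeas : ∀ n k, AEMeasurable (P n k) :=
    fun n k => Finset.aemeasurable_fun_sum _ fun i _ => hg (e i) k
  -- inner exchange
  have hinner : ∀ k, (∫⁻ η, (∑' l, g l k η) ^ (2:ℝ)) = ⨆ n, ∫⁻ η, P n k η ^ (2:ℝ) := by
    intro k
    have h1 : ∀ η, (∑' l, g l k η) ^ (2:ℝ) = ⨆ n, P n k η ^ (2:ℝ) := by
      intro η
      rw [hS k η]
      exact iSup_rpow_two _ (hPmono k η)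
    simp_rw [h1]
    exact lintegral_iSup' (fun n => (hPmeas n k).pow_const _)
      (ae_of_all _ fun η n m hnm =>
        ENNReal.rpow_le_rpow (hPmono k η hnm) (by norm_num))
  -- outer exchange via counting measure
  have houter : (∑' k, ⨆ n, ∫⁻ η, P n k η ^ (2:ℝ)) =
      ⨆ n, ∑' k, ∫⁻ η, P n k η ^ (2:ℝ) := by
    rw [← lintegral_count]
    rw [lintegral_iSup' (fun n => (measurable_of_countable _).aemeasurable)
      (ae_of_all _ fun k n m hnm =>
        lintegral_mono fun η => ENNReal.rpow_le_rpow (hPmono k η hnm) (by norm_num))]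
    exact iSup_congr fun n => lintegral_count _
  have hQle : ∀ n, (∑' k, ∫⁻ η, P n k η ^ (2:ℝ)) ≤ (∑' l, MN (g l)) ^ (2:ℝ) := by
    intro n
    have h1 : MN (P n) ≤ ∑' l, MN (g l) := by
      calc MN (P n) ≤ ∑ i ∈ Finset.range n, MN (g (e i)) := MN_finsum_le e g hg n
        _ ≤ ∑' i : ℕ, MN (g (e i)) := ENNReal.sum_le_tsum _
        _ = ∑' l, MN (g l) := Equiv.tsum_eq e (fun l => MN (g l))
    calc (∑' k, ∫⁻ η, P n k η ^ (2:ℝ)) = (MN (P n)) ^ (2:ℝ) := (MN_sq _).symm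
      _ ≤ (∑' l, MN (g l)) ^ (2:ℝ) := ENNReal.rpow_le_rpow h1 (by norm_num)
  calc MN (fun k η => ∑' l, g l k η)
      = (⨆ n, ∑' k, ∫⁻ η, P n k η ^ (2:ℝ)) ^ (1/2:ℝ) := by
        rw [MN]; congr 1
        rw [← houter]
        exact tsum_congr hinner
    _ ≤ ((∑' l, MN (g l)) ^ (2:ℝ)) ^ (1/2:ℝ) :=
        ENNReal.rpow_le_rpow (iSup_le hQle) (by norm_num)
    _ = ∑' l, MN (g l) := ennreal_rpow_sq_half _

lemma tsum_mul_le_sqrt {α : Type*} [MeasurableSpace α] [MeasurableSingletonClass α] [Countable α]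
    (u v : α → ℝ≥0∞) :
    ∑' l, u l * v l ≤ (∑' l, u l ^ (2:ℝ)) ^ (1/2:ℝ) * (∑' l, v l ^ (2:ℝ)) ^ (1/2:ℝ) := by
  have h := ENNReal.lintegral_mul_norm_pow_le (μ := Measure.count)
    (f := fun l => u l ^ (2:ℝ)) (g := fun l => v l ^ (2:ℝ))
    (measurable_of_countable _).aemeasurable (measurable_of_countable _).aemeasurable
    (by norm_num : (0:ℝ) ≤ 1/2) (by norm_num : (0:ℝ) ≤ 1/2) (by norm_num)
  rw [lintegral_count, lintegral_count, lintegral_count] at h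
  simp_rw [ennreal_rpow_sq_half] at h
  exact h

lemma summable_int_one_add_abs {p : ℝ} (hp : 1 < p) :
    Summable (fun n : ℤ => (1 + |(n:ℝ)|) ^ (-p)) := by
  have h := (Real.summable_nat_rpow (p := -p)).2 (by linarith)
  have h1 := (summable_nat_add_iff (f := fun n : ℕ => (n : ℝ) ^ (-p)) 1).2 h
  have h2 : Summable (fun n : ℕ => ((1:ℝ) + |(n:ℝ)|) ^ (-p)) := by
    simpa [abs_of_nonneg, add_comm] using h1
  apply Summable.of_nat_of_neg <;> simpa using h2

lemma tsum_pi_prod (n : ℕ) (u : ℤ → ℝ≥0∞) :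
    ∑' m : Fin n → ℤ, ∏ i, u (m i) = (∑' j : ℤ, u j) ^ n := by
  induction n with
  | zero =>
      rw [show ((∑' j : ℤ, u j) ^ 0) = 1 from pow_zero _]
      have h : ∀ m : Fin 0 → ℤ, (∏ i, u (m i)) = 1 := fun m => by simp
      simp_rw [h]
      exact tsum_eq_single (default : Fin 0 → ℤ)
        (fun b hb => absurd (Subsingleton.elim b default) hb) |>.trans rfl
  | succ n ih =>
      set e : ℤ × (Fin n → ℤ) ≃ (Fin (n+1) → ℤ) := Fin.consEquiv (fun _ => ℤ) with he
      rw [← Equiv.tsum_eq e (fun m => ∏ i, u (m i))]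
      rw [ENNReal.tsum_prod']
      have hsplit : ∀ (x : ℤ) (y : Fin n → ℤ),
          (∏ i, u ((e (x, y)) i)) = u x * ∏ i, u (y i) := by
        intro x y
        have hx : e (x, y) = Fin.cons x y := rfl
        rw [hx, Fin.prod_univ_succ]
        simp
      simp_rw [hsplit]
      simp_rw [ENNReal.tsum_mul_left]
      rw [ih, ENNReal.tsum_mul_right]
      ring

lemma Cd_ne_top {d : ℕ} (hd : 1 ≤ d) {σ : ℝ} (hσd : (d : ℝ) / 2 < σ) :
    (∑' m : Fin d → ℤ, ENNReal.ofReal (jb (znorm m) ^ (-σ)) ^ (2:ℝ)) ≠ ⊤ := by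
  have hd0 : (0:ℝ) < d := by exact_mod_cast Nat.lt_of_lt_of_le Nat.zero_lt_one hd
  set p : ℝ := 2 * σ / d with hp
  have hσ0 : 0 < σ := lt_of_le_of_lt (by positivity) hσd
  have hp1 : 1 < p := by
    rw [hp, lt_div_iff₀ hd0]
    linarith
  -- termwise bound
  have hterm : ∀ m : Fin d → ℤ,
      ENNReal.ofReal (jb (znorm m) ^ (-σ)) ^ (2:ℝ) ≤
        ENNReal.ofReal (2 ^ (2*σ)) * ∏ i, ENNReal.ofReal ((1 + |(m i : ℝ)|) ^ (-p)) := by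
    intro m
    set S := znorm m with hS
    have hS0 : 0 ≤ S := znorm_nonneg m
    have hsq : ENNReal.ofReal (jb S ^ (-σ)) ^ (2:ℝ) =
        ENNReal.ofReal (jb S ^ (-(2*σ))) := by
      rw [ennreal_rpow_two_eq, ← ENNReal.ofReal_mul (Real.rpow_nonneg (jb_nonneg _) _),
        ← Real.rpow_add (jb_pos _)]
      ring_nf
    rw [hsq]
    have h1 : (1 + S) / 2 ≤ jb S := by
      have := one_le_jb S
      have := self_le_jb hS0
      linarith
    have h2 : jb S ^ (-(2*σ)) ≤ ((1 + S)/2) ^ (-(2*σ)) :=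
      Real.rpow_le_rpow_of_nonpos (by linarith) h1 (by linarith)
    have h3 : ((1 + S)/2) ^ (-(2*σ)) = 2 ^ (2*σ) * (1 + S) ^ (-(2*σ)) := by
      rw [Real.div_rpow (by linarith) (by norm_num),
        Real.rpow_neg (by norm_num : (0:ℝ) ≤ 2) (2*σ)]
      field_simp
    have hprod : ∏ i, (1 + |(m i : ℝ)|) ≤ (1 + S) ^ d := by
      have hcard : (Finset.univ : Finset (Fin d)).card = d := by simp
      calc ∏ i, (1 + |(m i : ℝ)|) ≤ ∏ _i : Fin d, (1 + S) := by
            apply Finset.prod_le_prod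
            · intro i _; positivity
            · intro i _
              have : |(m i : ℝ)| ≤ S := by
                rw [hS, znorm]
                exact Finset.single_le_sum (f := fun j => |(m j : ℝ)|) (fun j _ => abs_nonneg _) (Finset.mem_univ i)
              linarith
        _ = (1 + S) ^ d := by rw [Finset.prod_const, hcard]
    have h4 : (1 + S) ^ (-(2*σ)) ≤ ∏ i, (1 + |(m i : ℝ)|) ^ (-p) := by
      have hprodpos : (0:ℝ) < ∏ i, (1 + |(m i : ℝ)|) :=
        Finset.prod_pos fun i _ => by positivity
      have h5 : (∏ i, (1 + |(m i : ℝ)|)) ^ p ≤ (1 + S) ^ (2*σ) := by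
        calc (∏ i, (1 + |(m i : ℝ)|)) ^ p ≤ ((1 + S) ^ d) ^ p :=
              Real.rpow_le_rpow hprodpos.le hprod (by positivity)
          _ = (1 + S) ^ ((d : ℝ) * p) := by
              rw [← Real.rpow_natCast (1 + S) d, ← Real.rpow_mul (by linarith)]
          _ = (1 + S) ^ (2*σ) := by
              congr 1
              rw [hp]; field_simp [hd0.ne']
      have h6 : ((1 + S) ^ (2*σ))⁻¹ ≤ ((∏ i, (1 + |(m i : ℝ)|)) ^ p)⁻¹ := by
        apply inv_anti₀ (Real.rpow_pos_of_pos hprodpos p) h5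
      calc (1 + S) ^ (-(2*σ)) = ((1 + S) ^ (2*σ))⁻¹ := Real.rpow_neg (by linarith) _
        _ ≤ ((∏ i, (1 + |(m i : ℝ)|)) ^ p)⁻¹ := h6
        _ = (∏ i, (1 + |(m i : ℝ)|)) ^ (-p) := (Real.rpow_neg hprodpos.le _).symm
        _ = ∏ i, (1 + |(m i : ℝ)|) ^ (-p) :=
            (Real.finset_prod_rpow _ _ (fun i _ => by positivity) _).symm
    calc ENNReal.ofReal (jb S ^ (-(2*σ)))
        ≤ ENNReal.ofReal (2 ^ (2*σ) * ∏ i, (1 + |(m i : ℝ)|) ^ (-p)) := by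
          apply ENNReal.ofReal_le_ofReal
          calc jb S ^ (-(2*σ)) ≤ ((1 + S)/2) ^ (-(2*σ)) := h2
            _ = 2 ^ (2*σ) * (1 + S) ^ (-(2*σ)) := h3
            _ ≤ 2 ^ (2*σ) * ∏ i, (1 + |(m i : ℝ)|) ^ (-p) := by
                apply mul_le_mul_of_nonneg_left h4 (by positivity)
      _ = ENNReal.ofReal (2 ^ (2*σ)) * ∏ i, ENNReal.ofReal ((1 + |(m i : ℝ)|) ^ (-p)) := by
          rw [ENNReal.ofReal_mul (by positivity),
            ENNReal.ofReal_prod_of_nonneg (fun i _ => by positivity)]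
  -- sum the bound
  have hsum : (∑' m : Fin d → ℤ, ENNReal.ofReal (jb (znorm m) ^ (-σ)) ^ (2:ℝ)) ≤
      ENNReal.ofReal (2 ^ (2*σ)) *
        (∑' j : ℤ, ENNReal.ofReal ((1 + |(j : ℝ)|) ^ (-p))) ^ d := by
    calc (∑' m : Fin d → ℤ, ENNReal.ofReal (jb (znorm m) ^ (-σ)) ^ (2:ℝ))
        ≤ ∑' m : Fin d → ℤ, ENNReal.ofReal (2 ^ (2*σ)) *
            ∏ i, ENNReal.ofReal ((1 + |(m i : ℝ)|) ^ (-p)) := ENNReal.tsum_le_tsum hterm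
      _ = ENNReal.ofReal (2 ^ (2*σ)) *
            ∑' m : Fin d → ℤ, ∏ i, ENNReal.ofReal ((1 + |(m i : ℝ)|) ^ (-p)) :=
          ENNReal.tsum_mul_left
      _ = ENNReal.ofReal (2 ^ (2*σ)) *
            (∑' j : ℤ, ENNReal.ofReal ((1 + |(j : ℝ)|) ^ (-p))) ^ d := by
          rw [tsum_pi_prod d (fun j => ENNReal.ofReal ((1 + |(j : ℝ)|) ^ (-p)))]
  have hfin : (∑' j : ℤ, ENNReal.ofReal ((1 + |(j : ℝ)|) ^ (-p))) ≠ ⊤ := by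
    rw [← ENNReal.ofReal_tsum_of_nonneg (fun j => by positivity)
      (summable_int_one_add_abs hp1)]
    exact ENNReal.ofReal_ne_top
  exact ne_top_of_le_ne_top
    (ENNReal.mul_ne_top ENNReal.ofReal_ne_top (ENNReal.pow_ne_top hfin)) hsum

noncomputable def GG {d : ℕ} (lam σ s : ℝ) (f : (Fin d → ℤ) → (Fin d → ℝ) → ℂ)
    (m : Fin d → ℤ) (ζ : Fin d → ℝ) : ℝ≥0∞ :=
  ENNReal.ofReal (gw lam σ s m ζ * ‖f m ζ‖)

noncomputable def aa {d : ℕ} (lam σ s t : ℝ) (h : (Fin d → ℤ) → ℂ) (l : Fin d → ℤ) : ℝ≥0∞ :=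
  ENNReal.ofReal (gw lam σ s l (fun i => (l i : ℝ) * t) * ‖h l‖)

noncomputable def ww {d : ℕ} (σ : ℝ) (m : Fin d → ℤ) : ℝ≥0∞ :=
  ENNReal.ofReal (jb (znorm m) ^ (-σ))

lemma ww_ne_top {d : ℕ} (σ : ℝ) (m : Fin d → ℤ) : ww σ m ≠ ⊤ := ENNReal.ofReal_ne_top
lemma aa_ne_top {d : ℕ} (lam σ s t : ℝ) (h : (Fin d → ℤ) → ℂ) (l : Fin d → ℤ) :
    aa lam σ s t h l ≠ ⊤ := ENNReal.ofReal_ne_top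

section Core

variable {d : ℕ} {s lam σ t : ℝ}
  {f : (Fin d → ℤ) → (Fin d → ℝ) → ℂ} {h : (Fin d → ℤ) → ℂ}

/-- The core `ℝ≥0∞` estimate. -/
lemma core_est (hd : 1 ≤ d) (hs0 : 0 < s) (hs1 : s ≤ 1) (hlam : 0 < lam) (hσ0 : 0 ≤ σ)
    (hGmeas : ∀ m, AEMeasurable (GG lam σ s f m) (volume : Measure (Fin d → ℝ))) :
    (∑' k : Fin d → ℤ, ∫⁻ η : Fin d → ℝ,
        (ENNReal.ofReal (gw lam σ s k η *
          ‖∑' l : Fin d → ℤ, h l * f (k - l) (fun i => η i - (l i : ℝ) * t)‖)) ^ (2:ℝ)) ≤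
      ENNReal.ofReal (2 ^ σ) ^ (2:ℝ) * 4 * (∑' m : Fin d → ℤ, ww σ m ^ (2:ℝ)) *
        (∑' l : Fin d → ℤ, aa lam σ s t h l ^ (2:ℝ)) *
        (∑' m : Fin d → ℤ, ∫⁻ ζ : Fin d → ℝ, GG lam σ s f m ζ ^ (2:ℝ)) := by
  classical
  haveI : NeZero d := ⟨by omega⟩
  haveI : Nonempty (Fin d) := ⟨⟨0, by omega⟩⟩
  haveI : Infinite (Fin d → ℤ) := by infer_instance
  obtain ⟨den⟩ := nonempty_denumerable (Fin d → ℤ)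
  let e : ℕ ≃ (Fin d → ℤ) := (@Denumerable.eqv _ den).symm
  set θ : (Fin d → ℤ) → (Fin d → ℝ) := fun l => fun i => (l i : ℝ) * t with hθ
  set G := GG lam σ s f with hG
  set a := aa lam σ s t h with ha'
  set w : (Fin d → ℤ) → ℝ≥0∞ := ww σ with hw
  set c2 : ℝ≥0∞ := ENNReal.ofReal (2 ^ σ) with hc2
  set Cd : ℝ≥0∞ := ∑' m : Fin d → ℤ, w m ^ (2:ℝ) with hCd
  set Nh2 : ℝ≥0∞ := ∑' l : Fin d → ℤ, a l ^ (2:ℝ) with hNh2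
  set Nf2 : ℝ≥0∞ := ∑' m : Fin d → ℤ, ∫⁻ ζ, G m ζ ^ (2:ℝ) with hNf2
  set Φ : (Fin d → ℤ) → (Fin d → ℝ) → ℝ≥0∞ := fun k η =>
    ENNReal.ofReal (gw lam σ s k η *
      ‖∑' l : Fin d → ℤ, h l * f (k - l) (fun i => η i - (l i : ℝ) * t)‖) with hΦ
  -- shifted measurability
  have hGshift : ∀ (m : Fin d → ℤ) (c : Fin d → ℝ),
      AEMeasurable (fun η => G m (η - c)) (volume : Measure (Fin d → ℝ)) := by
    intro m c
    have hmp : MeasurePreserving (fun η : Fin d → ℝ => η - c) volume volume := by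
      simpa [sub_eq_add_neg] using
        measurePreserving_add_right (volume : Measure (Fin d → ℝ)) (-c)
    exact (hGmeas m).comp_quasiMeasurePreserving hmp.quasiMeasurePreserving
  -- the majorant pieces
  set g1 : (Fin d → ℤ) → (Fin d → ℤ) → (Fin d → ℝ) → ℝ≥0∞ :=
    fun l k η => a l * (w (k - l) * G (k - l) (η - θ l)) with hg1
  set g2 : (Fin d → ℤ) → (Fin d → ℤ) → (Fin d → ℝ) → ℝ≥0∞ :=
    fun l k η => (w l * a l) * G (k - l) (η - θ l) with hg2
  set g1' : (Fin d → ℤ) → (Fin d → ℤ) → (Fin d → ℝ) → ℝ≥0∞ :=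
    fun m k η => a (k - m) * (w m * G m (η - θ (k - m))) with hg1'
  have hg1meas : ∀ l k, AEMeasurable (g1 l k) (volume : Measure (Fin d → ℝ)) :=
    fun l k => ((hGshift (k - l) (θ l)).const_mul (w (k - l))).const_mul (a l)
  have hg2meas : ∀ l k, AEMeasurable (g2 l k) (volume : Measure (Fin d → ℝ)) :=
    fun l k => (hGshift (k - l) (θ l)).const_mul (w l * a l)
  have hg1'meas : ∀ m k, AEMeasurable (g1' m k) (volume : Measure (Fin d → ℝ)) :=
    fun m k => ((hGshift m (θ (k - m))).const_mul (w m)).const_mul (a (k - m))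
  -- pointwise bound
  have hpoint : ∀ k η, Φ k η ≤ ∑' l, c2 * (g1 l k η + g2 l k η) := by
    intro k η
    by_cases hsml : Summable (fun l : Fin d → ℤ =>
      ‖h l * f (k - l) (fun i => η i - (l i : ℝ) * t)‖)
    · -- summable case
      have hnorm : ‖∑' l : Fin d → ℤ, h l * f (k - l) (fun i => η i - (l i : ℝ) * t)‖ ≤
          ∑' l : Fin d → ℤ, ‖h l‖ * ‖f (k - l) (fun i => η i - (l i : ℝ) * t)‖ := by
        refine (norm_tsum_le_tsum_norm hsml).trans_eq (tsum_congr fun l => norm_mul _ _)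
      have hsml' : Summable (fun l : Fin d → ℤ =>
          ‖h l‖ * ‖f (k - l) (fun i => η i - (l i : ℝ) * t)‖) := by
        simpa [norm_mul] using hsml
      have step1 : Φ k η ≤ ENNReal.ofReal (gw lam σ s k η *
          ∑' l : Fin d → ℤ, ‖h l‖ * ‖f (k - l) (fun i => η i - (l i : ℝ) * t)‖) := by
        apply ENNReal.ofReal_le_ofReal
        exact mul_le_mul_of_nonneg_left hnorm (gw_pos lam σ s k η).le
      have step2 : gw lam σ s k η *
          (∑' l : Fin d → ℤ, ‖h l‖ * ‖f (k - l) (fun i => η i - (l i : ℝ) * t)‖) =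
          ∑' l : Fin d → ℤ, gw lam σ s k η *
            (‖h l‖ * ‖f (k - l) (fun i => η i - (l i : ℝ) * t)‖) := by
        rw [tsum_mul_left]
      have step3 : ENNReal.ofReal (∑' l : Fin d → ℤ, gw lam σ s k η *
          (‖h l‖ * ‖f (k - l) (fun i => η i - (l i : ℝ) * t)‖)) =
          ∑' l : Fin d → ℤ, ENNReal.ofReal (gw lam σ s k η *
            (‖h l‖ * ‖f (k - l) (fun i => η i - (l i : ℝ) * t)‖)) := by
        apply ENNReal.ofReal_tsum_of_nonneg
        · intro l
          have := (gw_pos lam σ s k η).le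
          positivity
        · exact hsml'.mul_left _
      have hterm : ∀ l : Fin d → ℤ,
          ENNReal.ofReal (gw lam σ s k η *
            (‖h l‖ * ‖f (k - l) (fun i => η i - (l i : ℝ) * t)‖)) ≤
            c2 * (g1 l k η + g2 l k η) := by
        intro l
        have htri : znorm k + rnorm η ≤
            (znorm l + rnorm (θ l)) + (znorm (k - l) + rnorm (η - θ l)) := by
          have h1 := znorm_tri k l
          have h2 := rnorm_tri η (θ l)
          linarith
        have hkey := key_real (d := d) (lam := lam) (σ := σ) (s := s)
          hlam.le hσ0 hs0 hs1 htri (norm_nonneg (h l)) (norm_nonneg (f (k - l) (η - θ l)))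
        have hgl : (0:ℝ) ≤ gw lam σ s l (θ l) * ‖h l‖ :=
          mul_nonneg (gw_pos _ _ _ _ _).le (norm_nonneg _)
        have hgm : (0:ℝ) ≤ gw lam σ s (k - l) (η - θ l) * ‖f (k - l) (η - θ l)‖ :=
          mul_nonneg (gw_pos _ _ _ _ _).le (norm_nonneg _)
        have hwm : (0:ℝ) ≤ jb (znorm (k - l)) ^ (-σ) := Real.rpow_nonneg (jb_nonneg _) _
        have hwl : (0:ℝ) ≤ jb (znorm l) ^ (-σ) := Real.rpow_nonneg (jb_nonneg _) _
        have harg : (fun i => η i - (l i : ℝ) * t) = η - θ l := rfl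
        calc ENNReal.ofReal (gw lam σ s k η *
              (‖h l‖ * ‖f (k - l) (fun i => η i - (l i : ℝ) * t)‖))
            ≤ ENNReal.ofReal (2 ^ σ * ((gw lam σ s l (θ l) * ‖h l‖) *
                (jb (znorm (k - l)) ^ (-σ) *
                  (gw lam σ s (k - l) (η - θ l) * ‖f (k - l) (η - θ l)‖)) +
                (jb (znorm l) ^ (-σ) * (gw lam σ s l (θ l) * ‖h l‖)) *
                (gw lam σ s (k - l) (η - θ l) * ‖f (k - l) (η - θ l)‖))) := by
              rw [harg]
              exact ENNReal.ofReal_le_ofReal hkey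
          _ = c2 * (g1 l k η + g2 l k η) := by
              rw [hc2, hg1, hg2, ha', hw, hG]
              rw [ENNReal.ofReal_mul (Real.rpow_nonneg (by norm_num : (0:ℝ) ≤ 2) σ)]
              congr 1
              rw [ENNReal.ofReal_add (mul_nonneg hgl (mul_nonneg hwm hgm))
                (mul_nonneg (mul_nonneg hwl hgl) hgm)]
              congr 1
              · rw [ENNReal.ofReal_mul hgl, ENNReal.ofReal_mul hwm]
                rfl
              · rw [ENNReal.ofReal_mul (mul_nonneg hwl hgl), ENNReal.ofReal_mul hwl]
                rfl
      calc Φ k η ≤ ENNReal.ofReal (gw lam σ s k η *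
            ∑' l : Fin d → ℤ, ‖h l‖ * ‖f (k - l) (fun i => η i - (l i : ℝ) * t)‖) := step1
        _ = ∑' l : Fin d → ℤ, ENNReal.ofReal (gw lam σ s k η *
              (‖h l‖ * ‖f (k - l) (fun i => η i - (l i : ℝ) * t)‖)) := by
            rw [step2, step3]
        _ ≤ ∑' l, c2 * (g1 l k η + g2 l k η) := ENNReal.tsum_le_tsum hterm
    · -- non-summable case
      have hns : ¬ Summable (fun l : Fin d → ℤ =>
          h l * f (k - l) (fun i => η i - (l i : ℝ) * t)) := by
        intro hcon
        exact hsml (summable_norm_iff.2 hcon)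
      have hzero : (∑' l : Fin d → ℤ, h l * f (k - l) (fun i => η i - (l i : ℝ) * t)) = 0 :=
        tsum_eq_zero_of_not_summable hns
      rw [hΦ]
      simp only [hzero, norm_zero, mul_zero, ENNReal.ofReal_zero]
      exact zero_le
  -- combine
  have hΦle : ∀ k η, Φ k η ≤
      c2 * ((∑' l, g1 l k η) + (∑' l, g2 l k η)) := by
    intro k η
    calc Φ k η ≤ ∑' l, c2 * (g1 l k η + g2 l k η) := hpoint k η
      _ = c2 * ∑' l, (g1 l k η + g2 l k η) := ENNReal.tsum_mul_left
      _ = c2 * ((∑' l, g1 l k η) + (∑' l, g2 l k η)) := by rw [ENNReal.tsum_add]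
  -- reindex g1 into g1'
  have hreindex : ∀ k η, (∑' l, g1 l k η) = ∑' m, g1' m k η := by
    intro k η
    have := Equiv.tsum_eq (Equiv.subLeft k) (fun m => g1' m k η)
    rw [← this]
    apply tsum_congr
    intro l
    simp only [hg1, hg1', Equiv.subLeft_apply, sub_sub_cancel]
  -- MN computations
  have hMNg1' : ∀ m, MN (g1' m) =
      w m * (∫⁻ ζ, G m ζ ^ (2:ℝ)) ^ (1/2:ℝ) * Nh2 ^ (1/2:ℝ) := by
    intro m
    have hconst_ne : (w m ^ (2:ℝ)) ≠ ⊤ :=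
      ENNReal.rpow_ne_top_of_nonneg (by norm_num) (ww_ne_top σ m)
    have hη : ∀ k, (∫⁻ η, g1' m k η ^ (2:ℝ)) =
        a (k - m) ^ (2:ℝ) * (w m ^ (2:ℝ) * ∫⁻ ζ, G m ζ ^ (2:ℝ)) := by
      intro k
      have hptw : ∀ η, g1' m k η ^ (2:ℝ) =
          (a (k - m) ^ (2:ℝ) * w m ^ (2:ℝ)) * G m (η - θ (k - m)) ^ (2:ℝ) := by
        intro η
        rw [hg1']
        rw [ENNReal.mul_rpow_of_nonneg _ _ (by norm_num : (0:ℝ) ≤ 2),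
          ENNReal.mul_rpow_of_nonneg _ _ (by norm_num : (0:ℝ) ≤ 2)]
        ring
      simp_rw [hptw]
      rw [lintegral_const_mul' _ _ (ENNReal.mul_ne_top
        (ENNReal.rpow_ne_top_of_nonneg (by norm_num) (aa_ne_top lam σ s t h _)) hconst_ne)]
      rw [lintegral_sub_right_eq_self (fun ζ => G m ζ ^ (2:ℝ)) (θ (k - m))]
      ring
    rw [MN]
    simp_rw [hη]
    rw [ENNReal.tsum_mul_right]
    rw [show (∑' k, a (k - m) ^ (2:ℝ)) = Nh2 from
      Equiv.tsum_eq (Equiv.subRight m) (fun x => a x ^ (2:ℝ))]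
    rw [ENNReal.mul_rpow_of_nonneg _ _ (by norm_num : (0:ℝ) ≤ 1/2),
      ENNReal.mul_rpow_of_nonneg _ _ (by norm_num : (0:ℝ) ≤ 1/2),
      ennreal_rpow_sq_half]
    ring
  have hMNg2 : ∀ l, MN (g2 l) = (w l * a l) * Nf2 ^ (1/2:ℝ) := by
    intro l
    have hconst_ne : (w l * a l) ^ (2:ℝ) ≠ ⊤ :=
      ENNReal.rpow_ne_top_of_nonneg (by norm_num)
        (ENNReal.mul_ne_top (ww_ne_top σ l) (aa_ne_top lam σ s t h l))
    have hη : ∀ k, (∫⁻ η, g2 l k η ^ (2:ℝ)) =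
        (w l * a l) ^ (2:ℝ) * ∫⁻ ζ, G (k - l) ζ ^ (2:ℝ) := by
      intro k
      have hptw : ∀ η, g2 l k η ^ (2:ℝ) =
          (w l * a l) ^ (2:ℝ) * G (k - l) (η - θ l) ^ (2:ℝ) := by
        intro η
        rw [hg2, ENNReal.mul_rpow_of_nonneg _ _ (by norm_num : (0:ℝ) ≤ 2)]
      simp_rw [hptw]
      rw [lintegral_const_mul' _ _ hconst_ne]
      rw [lintegral_sub_right_eq_self (fun ζ => G (k - l) ζ ^ (2:ℝ)) (θ l)]
    rw [MN]
    simp_rw [hη]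
    rw [ENNReal.tsum_mul_left]
    rw [show (∑' k, ∫⁻ ζ, G (k - l) ζ ^ (2:ℝ)) = Nf2 from
      Equiv.tsum_eq (Equiv.subRight l) (fun x => ∫⁻ ζ, G x ζ ^ (2:ℝ))]
    rw [ENNReal.mul_rpow_of_nonneg _ _ (by norm_num : (0:ℝ) ≤ 1/2), ennreal_rpow_sq_half]
  -- sum the MN bounds
  have hsum1 : (∑' m, MN (g1' m)) ≤ Cd ^ (1/2:ℝ) * Nf2 ^ (1/2:ℝ) * Nh2 ^ (1/2:ℝ) := by
    simp_rw [hMNg1']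
    rw [ENNReal.tsum_mul_right]
    apply mul_le_mul_left
    calc (∑' m, w m * (∫⁻ ζ, G m ζ ^ (2:ℝ)) ^ (1/2:ℝ))
        ≤ (∑' m, w m ^ (2:ℝ)) ^ (1/2:ℝ) *
          (∑' m, ((∫⁻ ζ, G m ζ ^ (2:ℝ)) ^ (1/2:ℝ)) ^ (2:ℝ)) ^ (1/2:ℝ) :=
          tsum_mul_le_sqrt _ _
      _ = Cd ^ (1/2:ℝ) * Nf2 ^ (1/2:ℝ) := by
          rw [hCd, hNf2]
          congr 2
          apply tsum_congr
          intro m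
          exact ennreal_rpow_half_sq _
  have hsum2 : (∑' l, MN (g2 l)) ≤ Cd ^ (1/2:ℝ) * Nh2 ^ (1/2:ℝ) * Nf2 ^ (1/2:ℝ) := by
    simp_rw [hMNg2]
    rw [ENNReal.tsum_mul_right]
    apply mul_le_mul_left
    calc (∑' l, w l * a l)
        ≤ (∑' l, w l ^ (2:ℝ)) ^ (1/2:ℝ) * (∑' l, a l ^ (2:ℝ)) ^ (1/2:ℝ) :=
          tsum_mul_le_sqrt _ _
      _ = Cd ^ (1/2:ℝ) * Nh2 ^ (1/2:ℝ) := by rw [hCd, hNh2]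
  -- total MN bound
  have hMNΦ : MN Φ ≤ c2 * 2 * (Cd ^ (1/2:ℝ) * Nh2 ^ (1/2:ℝ) * Nf2 ^ (1/2:ℝ)) := by
    calc MN Φ ≤ MN (fun k η => c2 * ((∑' l, g1 l k η) + (∑' l, g2 l k η))) :=
          MN_mono hΦle
      _ = c2 * MN (fun k η => (∑' l, g1 l k η) + (∑' l, g2 l k η)) :=
          MN_smul c2 ENNReal.ofReal_ne_top _
      _ ≤ c2 * (MN (fun k η => ∑' l, g1 l k η) + MN (fun k η => ∑' l, g2 l k η)) := by
          apply mul_le_mul_right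
          exact MN_add_le (fun k => AEMeasurable.ennreal_tsum fun l => hg1meas l k)
            (fun k => AEMeasurable.ennreal_tsum fun l => hg2meas l k)
      _ ≤ c2 * ((Cd ^ (1/2:ℝ) * Nf2 ^ (1/2:ℝ) * Nh2 ^ (1/2:ℝ)) +
            (Cd ^ (1/2:ℝ) * Nh2 ^ (1/2:ℝ) * Nf2 ^ (1/2:ℝ))) := by
          apply mul_le_mul_right
          apply add_le_add
          · calc MN (fun k η => ∑' l, g1 l k η)
                = MN (fun k η => ∑' m, g1' m k η) := by
                  congr 1
                  funext k η
                  exact hreindex k η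
              _ ≤ ∑' m, MN (g1' m) := MN_tsum_le e g1' hg1'meas
              _ ≤ Cd ^ (1/2:ℝ) * Nf2 ^ (1/2:ℝ) * Nh2 ^ (1/2:ℝ) := hsum1
          · calc MN (fun k η => ∑' l, g2 l k η)
                ≤ ∑' l, MN (g2 l) := MN_tsum_le e g2 hg2meas
              _ ≤ Cd ^ (1/2:ℝ) * Nh2 ^ (1/2:ℝ) * Nf2 ^ (1/2:ℝ) := hsum2
      _ = c2 * 2 * (Cd ^ (1/2:ℝ) * Nh2 ^ (1/2:ℝ) * Nf2 ^ (1/2:ℝ)) := by ring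
  -- square the bound
  have hfinal : (∑' k, ∫⁻ η, Φ k η ^ (2:ℝ)) ≤ c2 ^ (2:ℝ) * 4 * Cd * Nh2 * Nf2 := by
    have hsq : (∑' k, ∫⁻ η, Φ k η ^ (2:ℝ)) = (MN Φ) ^ (2:ℝ) := (MN_sq Φ).symm
    rw [hsq]
    calc (MN Φ) ^ (2:ℝ)
        ≤ (c2 * 2 * (Cd ^ (1/2:ℝ) * Nh2 ^ (1/2:ℝ) * Nf2 ^ (1/2:ℝ))) ^ (2:ℝ) :=
          ENNReal.rpow_le_rpow hMNΦ (by norm_num)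
      _ = c2 ^ (2:ℝ) * 4 * Cd * Nh2 * Nf2 := by
          rw [ENNReal.mul_rpow_of_nonneg _ _ (by norm_num : (0:ℝ) ≤ 2),
            ENNReal.mul_rpow_of_nonneg _ _ (by norm_num : (0:ℝ) ≤ 2),
            ENNReal.mul_rpow_of_nonneg _ _ (by norm_num : (0:ℝ) ≤ 2),
            ENNReal.mul_rpow_of_nonneg _ _ (by norm_num : (0:ℝ) ≤ 2),
            ennreal_rpow_half_sq, ennreal_rpow_half_sq, ennreal_rpow_half_sq]
          rw [show ((2:ℝ≥0∞) ^ (2:ℝ)) = 4 by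
            rw [show (2:ℝ) = ((2:ℕ):ℝ) by norm_num, ENNReal.rpow_natCast]; norm_num]
          ring
  exact hfinal

end Core

theorem stmt_18 (d : ℕ) (hd : 1 ≤ d) (s lam σ : ℝ) (hs0 : 0 < s) (hs1 : s ≤ 1)
    (hlam : 0 < lam) (hσ0 : 0 ≤ σ) (hσd : (d : ℝ) / 2 < σ) :
    ∃ C : ℝ, 0 < C ∧
      ∀ (t : ℝ) (f : (Fin d → ℤ) → (Fin d → ℝ) → ℂ) (h : (Fin d → ℤ) → ℂ),
        (∀ k, Integrable (fun η : Fin d → ℝ => gw lam σ s k η ^ 2 * ‖f k η‖ ^ 2)) →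
        Summable (fun k => ∫ η : Fin d → ℝ, gw lam σ s k η ^ 2 * ‖f k η‖ ^ 2) →
        Summable (fun k => gw lam σ s k (fun i => (k i : ℝ) * t) ^ 2 * ‖h k‖ ^ 2) →
        (∑' k : Fin d → ℤ, ∫ η : Fin d → ℝ,
            gw lam σ s k η ^ 2 *
              ‖∑' ℓ : Fin d → ℤ, h ℓ * f (k - ℓ) (fun i => η i - (ℓ i : ℝ) * t)‖ ^ 2) ≤
          C * (∑' k : Fin d → ℤ, gw lam σ s k (fun i => (k i : ℝ) * t) ^ 2 * ‖h k‖ ^ 2) *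
            (∑' k : Fin d → ℤ, ∫ η : Fin d → ℝ, gw lam σ s k η ^ 2 * ‖f k η‖ ^ 2) := by
  classical
  set Cd : ℝ≥0∞ := ∑' m : Fin d → ℤ, ww σ m ^ (2:ℝ) with hCd
  have hCdtop : Cd ≠ ⊤ := Cd_ne_top hd hσd
  set c2 : ℝ≥0∞ := ENNReal.ofReal (2 ^ σ) with hc2
  set B : ℝ≥0∞ := c2 ^ (2:ℝ) * 4 * Cd with hB
  have hBtop : B ≠ ⊤ := by
    apply ENNReal.mul_ne_top
    apply ENNReal.mul_ne_top
    · exact ENNReal.rpow_ne_top_of_nonneg (by norm_num) ENNReal.ofReal_ne_top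
    · exact (by norm_num : (4:ℝ≥0∞) ≠ ⊤)
    · exact hCdtop
  refine ⟨B.toReal + 1, by positivity, ?_⟩
  intro t f h hInt hSumf hSumh
  -- measurability of G
  have hGmeas : ∀ m, AEMeasurable (GG lam σ s f m) (volume : Measure (Fin d → ℝ)) := by
    intro m
    have hq : AEMeasurable (fun ζ : Fin d → ℝ => gw lam σ s m ζ ^ 2 * ‖f m ζ‖ ^ 2)
        (volume : Measure (Fin d → ℝ)) :=
      (hInt m).aestronglyMeasurable.aemeasurable
    have heq : GG lam σ s f m = fun ζ =>
        ENNReal.ofReal (Real.sqrt (gw lam σ s m ζ ^ 2 * ‖f m ζ‖ ^ 2)) := by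
      funext ζ
      rw [GG]
      congr 1
      rw [← mul_pow, Real.sqrt_sq (mul_nonneg (gw_pos _ _ _ _ _).le (norm_nonneg _))]
    rw [heq]
    exact ENNReal.measurable_ofReal.comp_aemeasurable
      (Real.continuous_sqrt.measurable.comp_aemeasurable hq)
  have hcore := core_est (t := t) (h := h) hd hs0 hs1 hlam hσ0 hGmeas
  -- identify the ENNReal norms with the real sums
  have hNh : (∑' l : Fin d → ℤ, aa lam σ s t h l ^ (2:ℝ)) =
      ENNReal.ofReal (∑' k : Fin d → ℤ,
        gw lam σ s k (fun i => (k i : ℝ) * t) ^ 2 * ‖h k‖ ^ 2) := by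
    rw [ENNReal.ofReal_tsum_of_nonneg (fun k => by positivity) hSumh]
    apply tsum_congr
    intro l
    rw [aa, ennreal_rpow_two_eq,
      ← ENNReal.ofReal_mul (mul_nonneg (gw_pos _ _ _ _ _).le (norm_nonneg _))]
    congr 1
    ring
  have hNf : (∑' m : Fin d → ℤ, ∫⁻ ζ : Fin d → ℝ, GG lam σ s f m ζ ^ (2:ℝ)) =
      ENNReal.ofReal (∑' k : Fin d → ℤ,
        ∫ η : Fin d → ℝ, gw lam σ s k η ^ 2 * ‖f k η‖ ^ 2) := by
    have hint_eq : ∀ m, (∫⁻ ζ : Fin d → ℝ, GG lam σ s f m ζ ^ (2:ℝ)) =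
        ENNReal.ofReal (∫ η : Fin d → ℝ, gw lam σ s m η ^ 2 * ‖f m η‖ ^ 2) := by
      intro m
      rw [ofReal_integral_eq_lintegral_ofReal (hInt m)
        (ae_of_all _ fun η => by positivity)]
      apply lintegral_congr
      intro η
      rw [GG, ennreal_rpow_two_eq,
        ← ENNReal.ofReal_mul (mul_nonneg (gw_pos _ _ _ _ _).le (norm_nonneg _))]
      congr 1
      ring
    simp_rw [hint_eq]
    rw [ENNReal.ofReal_tsum_of_nonneg
      (fun m => integral_nonneg fun η => by positivity) hSumf]
  rw [hNh, hNf] at hcore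
  set NhR : ℝ := ∑' k : Fin d → ℤ,
    gw lam σ s k (fun i => (k i : ℝ) * t) ^ 2 * ‖h k‖ ^ 2 with hNhR
  set NfR : ℝ := ∑' k : Fin d → ℤ,
    ∫ η : Fin d → ℝ, gw lam σ s k η ^ 2 * ‖f k η‖ ^ 2 with hNfR
  have hNhR0 : 0 ≤ NhR := tsum_nonneg fun k => by positivity
  have hNfR0 : 0 ≤ NfR := tsum_nonneg fun k => integral_nonneg fun η => by positivity
  -- the per-k lintegrals
  set I : (Fin d → ℤ) → ℝ≥0∞ := fun k => ∫⁻ η : Fin d → ℝ,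
    (ENNReal.ofReal (gw lam σ s k η *
      ‖∑' l : Fin d → ℤ, h l * f (k - l) (fun i => η i - (l i : ℝ) * t)‖)) ^ (2:ℝ) with hI
  have hIsum_le : (∑' k, I k) ≤ B * ENNReal.ofReal NhR * ENNReal.ofReal NfR := hcore
  have hRHStop : B * ENNReal.ofReal NhR * ENNReal.ofReal NfR ≠ ⊤ :=
    ENNReal.mul_ne_top (ENNReal.mul_ne_top hBtop ENNReal.ofReal_ne_top)
      ENNReal.ofReal_ne_top
  have hItot : (∑' k, I k) ≠ ⊤ := ne_top_of_le_ne_top hRHStop hIsum_le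
  have hIk_ne_top : ∀ k, I k ≠ ⊤ :=
    fun k => ne_top_of_le_ne_top hItot (ENNReal.le_tsum k)
  have hsummI : Summable (fun k => (I k).toReal) := ENNReal.summable_toReal hItot
  have hTk : ∀ k, (∫ η : Fin d → ℝ, gw lam σ s k η ^ 2 *
      ‖∑' l : Fin d → ℤ, h l * f (k - l) (fun i => η i - (l i : ℝ) * t)‖ ^ 2) ≤
      (I k).toReal := by
    intro k
    by_cases hint : Integrable (fun η : Fin d → ℝ => gw lam σ s k η ^ 2 *
      ‖∑' l : Fin d → ℤ, h l * f (k - l) (fun i => η i - (l i : ℝ) * t)‖ ^ 2)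
    · rw [integral_eq_lintegral_of_nonneg_ae
        (ae_of_all _ fun η => by positivity) hint.aestronglyMeasurable]
      apply le_of_eq
      congr 1
      apply lintegral_congr
      intro η
      rw [ennreal_rpow_two_eq,
        ← ENNReal.ofReal_mul (mul_nonneg (gw_pos _ _ _ _ _).le (norm_nonneg _))]
      congr 1
      ring
    · rw [integral_undef hint]
      exact ENNReal.toReal_nonneg
  have hTnn : ∀ k, 0 ≤ ∫ η : Fin d → ℝ, gw lam σ s k η ^ 2 *
      ‖∑' l : Fin d → ℤ, h l * f (k - l) (fun i => η i - (l i : ℝ) * t)‖ ^ 2 :=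
    fun k => integral_nonneg fun η => by positivity
  have hTsummable : Summable (fun k : Fin d → ℤ => ∫ η : Fin d → ℝ,
      gw lam σ s k η ^ 2 *
      ‖∑' l : Fin d → ℤ, h l * f (k - l) (fun i => η i - (l i : ℝ) * t)‖ ^ 2) :=
    Summable.of_nonneg_of_le hTnn hTk hsummI
  calc (∑' k : Fin d → ℤ, ∫ η : Fin d → ℝ, gw lam σ s k η ^ 2 *
      ‖∑' l : Fin d → ℤ, h l * f (k - l) (fun i => η i - (l i : ℝ) * t)‖ ^ 2)
      ≤ ∑' k, (I k).toReal := Summable.tsum_le_tsum hTk hTsummable hsummI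
    _ = (∑' k, I k).toReal := (ENNReal.tsum_toReal_eq hIk_ne_top).symm
    _ ≤ (B * ENNReal.ofReal NhR * ENNReal.ofReal NfR).toReal :=
        ENNReal.toReal_mono hRHStop hIsum_le
    _ = B.toReal * NhR * NfR := by
        rw [ENNReal.toReal_mul, ENNReal.toReal_mul,
          ENNReal.toReal_ofReal hNhR0, ENNReal.toReal_ofReal hNfR0]
    _ ≤ (B.toReal + 1) * NhR * NfR := by nlinarith [mul_nonneg hNhR0 hNfR0]
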